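/- arXiv:1602.00820 — 4 statements merged into one kernel-verified Lean document; each statement's English description precedes it below -/
import Mathlib

section
/- Let 0 < α < ∞ and 1 < D < ∞. Then there exists a constant C (depending only on α and D) such that for any finite index set {k_min, ..., k_max} ⊆ ℤ and any nonnegative sequences {b_k} and {c_k} indexed by it, satisfying b_{k+1} ≥ D·b_k for all k < k_max, it holds that ∑_{k=k_min}^{k_max} (∑_{m=k}^{k_max} c_m)^α · b_k ≤ C · ∑_{k=k_min}^{k_max} c_k^α · b_k. -/
open Finset

private lemma aux_rpow_add_le_add_rpow {p x y : ℝ} (hx : 0 ≤ x) (hy : 0 ≤ y)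
    (hp : 0 ≤ p) (hp1 : p ≤ 1) : (x + y) ^ p ≤ x ^ p + y ^ p := by
  lift x to NNReal using hx
  lift y to NNReal using hy
  rw [← NNReal.coe_add, ← NNReal.coe_rpow, ← NNReal.coe_rpow, ← NNReal.coe_rpow,
    ← NNReal.coe_add, NNReal.coe_le_coe]
  exact NNReal.rpow_add_le_add_rpow x y hp hp1

private lemma aux_key (α l : ℝ) (hα : 0 < α) (hl0 : 0 < l) (hl1 : l < 1)
    (x y : ℝ) (hx : 0 ≤ x) (hy : 0 ≤ y) :
    (x + y) ^ α ≤ max 1 (l ^ (1 - α)) * x ^ α + max 1 ((1 - l) ^ (1 - α)) * y ^ α := by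
  have h1l : (0:ℝ) < 1 - l := by linarith
  rcases le_or_gt α 1 with hle | hgt
  · have h := aux_rpow_add_le_add_rpow hx hy hα.le hle
    have h1 : x ^ α ≤ max 1 (l ^ (1 - α)) * x ^ α := by
      nlinarith [Real.rpow_nonneg hx α, le_max_left 1 (l ^ (1 - α))]
    have h2 : y ^ α ≤ max 1 ((1 - l) ^ (1 - α)) * y ^ α := by
      nlinarith [Real.rpow_nonneg hy α, le_max_left 1 ((1 - l) ^ (1 - α))]
    linarith
  · have hconv := convexOn_rpow hgt.le
    have hx' : x / l ∈ Set.Ici (0:ℝ) := Set.mem_Ici.2 (div_nonneg hx hl0.le)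
    have hy' : y / (1 - l) ∈ Set.Ici (0:ℝ) := Set.mem_Ici.2 (div_nonneg hy h1l.le)
    have h := hconv.2 hx' hy' hl0.le h1l.le (by ring)
    simp only [smul_eq_mul] at h
    have e1 : l * (x / l) + (1 - l) * (y / (1 - l)) = x + y := by
      field_simp
    rw [e1] at h
    have e2 : l * (x / l) ^ α = l ^ (1 - α) * x ^ α := by
      rw [Real.div_rpow hx hl0.le, Real.rpow_sub hl0, Real.rpow_one]
      field_simp
    have e3 : (1 - l) * (y / (1 - l)) ^ α = (1 - l) ^ (1 - α) * y ^ α := by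
      rw [Real.div_rpow hy h1l.le, Real.rpow_sub h1l, Real.rpow_one]
      field_simp
    rw [e2, e3] at h
    have h1 : l ^ (1 - α) * x ^ α ≤ max 1 (l ^ (1 - α)) * x ^ α :=
      mul_le_mul_of_nonneg_right (le_max_right _ _) (Real.rpow_nonneg hx α)
    have h2 : (1 - l) ^ (1 - α) * y ^ α ≤ max 1 ((1 - l) ^ (1 - α)) * y ^ α :=
      mul_le_mul_of_nonneg_right (le_max_right _ _) (Real.rpow_nonneg hy α)
    linarith

theorem stmt_0 (α D : ℝ) (hα : 0 < α) (hD : 1 < D) :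
    ∃ C : ℝ, 0 < C ∧
      ∀ (kmin kmax : ℤ), kmin ≤ kmax →
        ∀ (b c : ℤ → ℝ), (∀ k, 0 ≤ b k) → (∀ k, 0 ≤ c k) →
          (∀ k, kmin ≤ k → k < kmax → D * b k ≤ b (k + 1)) →
          ∑ k ∈ Finset.Icc kmin kmax, (∑ m ∈ Finset.Icc k kmax, c m) ^ α * b k ≤
            C * ∑ k ∈ Finset.Icc kmin kmax, (c k) ^ α * b k := by
  have hD0 : (0:ℝ) < D := lt_trans one_pos hD
  set t : ℝ := D ^ (-(2 * α)⁻¹ : ℝ) with ht_def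
  have ht0 : 0 < t := Real.rpow_pos_of_pos hD0 _
  have ht1 : t < 1 := by
    have hneg : (-(2 * α)⁻¹ : ℝ) < 0 := by
      have : 0 < (2 * α)⁻¹ := inv_pos.2 (by linarith)
      linarith
    calc t < D ^ (0:ℝ) := Real.rpow_lt_rpow_of_exponent_lt hD hneg
    _ = 1 := Real.rpow_zero D
  set l : ℝ := 1 - t with hl_def
  have hl0 : 0 < l := by simp only [hl_def]; linarith
  have hl1 : l < 1 := by simp only [hl_def]; linarith
  have h1l : (1 - l) = t := by simp [hl_def]
  set K : ℝ := max 1 (l ^ (1 - α)) with hK_def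
  set μ : ℝ := max 1 ((1 - l) ^ (1 - α)) with hμ_def
  have hK1 : 1 ≤ K := le_max_left _ _
  have hμ1 : 1 ≤ μ := le_max_left _ _
  have hμD : μ < D := by
    rw [hμ_def, h1l]
    rcases le_or_gt α 1 with hle | hgt
    · have h1 : t ^ (1 - α) ≤ 1 :=
        Real.rpow_le_one ht0.le ht1.le (by linarith)
      rw [max_eq_left h1]
      exact hD
    · have ht_pow : t ^ (1 - α) = D ^ ((-(2 * α)⁻¹) * (1 - α)) := by
        rw [ht_def, ← Real.rpow_mul hD0.le]
      have hexp : (-(2 * α)⁻¹) * (1 - α) ≤ 1 / 2 := by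
        have h2α : (0:ℝ) < 2 * α := by linarith
        have he : -(2 * α)⁻¹ * (1 - α) = (α - 1) / (2 * α) := by
          field_simp
          ring
        rw [he, div_le_iff₀ h2α]
        nlinarith
      have hsq : D ^ ((1:ℝ)/2) < D := by
        calc D ^ ((1:ℝ)/2) < D ^ (1:ℝ) := Real.rpow_lt_rpow_of_exponent_lt hD (by norm_num)
        _ = D := Real.rpow_one D
      have h2 : t ^ (1 - α) < D := by
        rw [ht_pow]
        calc D ^ ((-(2 * α)⁻¹) * (1 - α)) ≤ D ^ ((1:ℝ)/2) :=
              Real.rpow_le_rpow_of_exponent_le hD.le hexp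
        _ < D := hsq
      exact max_lt hD h2
  have hden : 0 < 1 - μ / D := by
    rw [sub_pos, div_lt_one hD0]; exact hμD
  refine ⟨K / (1 - μ / D), div_pos (by linarith) hden, ?_⟩
  intro kmin kmax hkk b c hb hc hgeo
  set S : ℤ → ℝ := fun k => ∑ m ∈ Finset.Icc k kmax, c m with hS_def
  set A : ℝ := ∑ k ∈ Finset.Icc kmin kmax, c k ^ α * b k with hA_def
  set T : ℝ := ∑ k ∈ Finset.Icc kmin kmax, S k ^ α * b k with hT_def
  have hSnn : ∀ k, 0 ≤ S k := fun k => Finset.sum_nonneg fun m _ => hc m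
  have hAnn : 0 ≤ A :=
    Finset.sum_nonneg fun k _ => mul_nonneg (Real.rpow_nonneg (hc k) α) (hb k)
  -- Step 1+2: T ≤ K * A + μ * ∑ S(k+1)^α b k
  have step2 : T ≤ K * A + μ * ∑ k ∈ Finset.Icc kmin kmax, S (k + 1) ^ α * b k := by
    have hterm : ∀ k ∈ Finset.Icc kmin kmax,
        S k ^ α * b k ≤ (K * c k ^ α + μ * S (k + 1) ^ α) * b k := by
      intro k hk
      rw [Finset.mem_Icc] at hk
      have hsplit : S k = c k + S (k + 1) := by
        have hins : Finset.Icc k kmax = insert k (Finset.Icc (k + 1) kmax) := by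
          ext x; simp only [Finset.mem_Icc, Finset.mem_insert]; omega
        have hnotin : k ∉ Finset.Icc (k + 1) kmax := by
          simp only [Finset.mem_Icc]; omega
        simp only [hS_def, hins, Finset.sum_insert hnotin]
      apply mul_le_mul_of_nonneg_right _ (hb k)
      rw [hsplit]
      exact aux_key α l hα hl0 hl1 _ _ (hc k) (hSnn (k + 1))
    calc T ≤ ∑ k ∈ Finset.Icc kmin kmax, (K * c k ^ α + μ * S (k + 1) ^ α) * b k :=
          Finset.sum_le_sum hterm
    _ = K * A + μ * ∑ k ∈ Finset.Icc kmin kmax, S (k + 1) ^ α * b k := by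
          simp only [hA_def, Finset.mul_sum, add_mul]
          rw [Finset.sum_add_distrib]
          congr 1 <;> apply Finset.sum_congr rfl <;> intro k _ <;> ring
  -- Step 3: ∑ S(k+1)^α b k ≤ T / D
  have step3 : ∑ k ∈ Finset.Icc kmin kmax, S (k + 1) ^ α * b k ≤ T / D := by
    have hins : Finset.Icc kmin kmax = insert kmax (Finset.Icc kmin (kmax - 1)) := by
      ext x; simp only [Finset.mem_Icc, Finset.mem_insert]; omega
    have hnotin : kmax ∉ Finset.Icc kmin (kmax - 1) := by
      simp only [Finset.mem_Icc]; omega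
    have hStop : S (kmax + 1) = 0 := by
      simp only [hS_def]
      rw [Finset.Icc_eq_empty (by omega), Finset.sum_empty]
    have e0 : ∑ k ∈ Finset.Icc kmin kmax, S (k + 1) ^ α * b k
        = ∑ k ∈ Finset.Icc kmin (kmax - 1), S (k + 1) ^ α * b k := by
      rw [hins, Finset.sum_insert hnotin, hStop, Real.zero_rpow hα.ne', zero_mul, zero_add]
    have e1 : ∑ k ∈ Finset.Icc kmin (kmax - 1), S (k + 1) ^ α * b k
        ≤ ∑ k ∈ Finset.Icc kmin (kmax - 1), S (k + 1) ^ α * b (k + 1) / D := by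
      apply Finset.sum_le_sum
      intro k hk
      rw [Finset.mem_Icc] at hk
      have hbk : b k ≤ b (k + 1) / D := by
        rw [le_div_iff₀ hD0]
        have := hgeo k hk.1 (by omega)
        linarith
      have := mul_le_mul_of_nonneg_left hbk (Real.rpow_nonneg (hSnn (k + 1)) α)
      calc S (k + 1) ^ α * b k ≤ S (k + 1) ^ α * (b (k + 1) / D) := this
      _ = S (k + 1) ^ α * b (k + 1) / D := by ring
    have e2 : ∑ k ∈ Finset.Icc kmin (kmax - 1), S (k + 1) ^ α * b (k + 1)
        = ∑ j ∈ Finset.Icc (kmin + 1) kmax, S j ^ α * b j := by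
      rw [show Finset.Icc (kmin + 1) kmax = Finset.Icc (kmin + (1:ℤ)) (kmax - 1 + 1) by
        congr 1; omega]
      rw [← Finset.map_add_right_Icc kmin (kmax - 1) 1, Finset.sum_map]
      rfl
    have e3 : ∑ j ∈ Finset.Icc (kmin + 1) kmax, S j ^ α * b j ≤ T := by
      apply Finset.sum_le_sum_of_subset_of_nonneg
      · apply Finset.Icc_subset_Icc (by omega) le_rfl
      · intro j _ _
        exact mul_nonneg (Real.rpow_nonneg (hSnn j) α) (hb j)
    rw [e0]
    calc ∑ k ∈ Finset.Icc kmin (kmax - 1), S (k + 1) ^ α * b k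
        ≤ ∑ k ∈ Finset.Icc kmin (kmax - 1), S (k + 1) ^ α * b (k + 1) / D := e1
    _ = (∑ k ∈ Finset.Icc kmin (kmax - 1), S (k + 1) ^ α * b (k + 1)) / D := by
        rw [Finset.sum_div]
    _ = (∑ j ∈ Finset.Icc (kmin + 1) kmax, S j ^ α * b j) / D := by rw [e2]
    _ ≤ T / D := (div_le_div_iff_of_pos_right hD0).mpr e3
  -- Step 4: conclude
  have hμ0 : (0:ℝ) ≤ μ := by linarith
  have step4 : T ≤ K * A + μ / D * T := by
    have h := mul_le_mul_of_nonneg_left step3 hμ0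
    calc T ≤ K * A + μ * ∑ k ∈ Finset.Icc kmin kmax, S (k + 1) ^ α * b k := step2
    _ ≤ K * A + μ * (T / D) := by linarith
    _ = K * A + μ / D * T := by ring
  have final : T ≤ K / (1 - μ / D) * A := by
    rw [div_mul_eq_mul_div, le_div_iff₀ hden]
    nlinarith [step4]
  exact final
end

section
/- Let 0 < α < ∞ and 1 < D < ∞. Then there exists a constant C (depending only on α and D) such that for any finite index set {k_min, ..., k_max} ⊆ ℤ and any nonnegative sequences {b_k} and {c_k} satisfying b_{k+1} ≥ D·b_k for all k < k_max, it holds that ∑_{k=k_min}^{k_max} (sup_{k ≤ m ≤ k_max} c_m)^α · b_k ≤ C · ∑_{k=k_min}^{k_max} c_k^α · b_k. -/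
open Finset

private lemma sum_Icc_Icc_comm_int {M : Type*} [AddCommMonoid M] (a b : ℤ) (f : ℤ → ℤ → M) :
    (∑ i ∈ Finset.Icc a b, ∑ j ∈ Finset.Icc i b, f i j) =
      ∑ j ∈ Finset.Icc a b, ∑ i ∈ Finset.Icc a j, f i j := by
  rw [Finset.sum_sigma', Finset.sum_sigma']
  refine sum_nbij' (fun x ↦ ⟨x.2, x.1⟩) (fun x ↦ ⟨x.2, x.1⟩) ?_ ?_ (fun _ _ ↦ rfl) (fun _ _ ↦ rfl)
    (fun _ _ ↦ rfl) <;>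
  simp only [Finset.mem_Icc, Sigma.forall, Finset.mem_sigma] <;>
  rintro a b ⟨⟨h₁, h₂⟩, ⟨h₃, h₄⟩⟩ <;>
  omega

theorem stmt_1 (α D : ℝ) (hα : 0 < α) (hD : 1 < D) :
    ∃ C : ℝ, 0 < C ∧
      ∀ (kmin kmax : ℤ), kmin ≤ kmax →
        ∀ (b c : ℤ → ℝ), (∀ k, 0 ≤ b k) → (∀ k, 0 ≤ c k) →
          (∀ k, kmin ≤ k → k < kmax → D * b k ≤ b (k + 1)) →
          ∑ k ∈ Finset.Icc kmin kmax, (⨆ m : (Finset.Icc k kmax : Finset ℤ), c m) ^ α * b k ≤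
            C * ∑ k ∈ Finset.Icc kmin kmax, (c k) ^ α * b k := by
  have hD0 : (0:ℝ) < D := lt_trans one_pos hD
  refine ⟨D / (D - 1), div_pos hD0 (by linarith), ?_⟩
  intro kmin kmax hkk b c hb hc hgrow
  -- growth: for kmin ≤ k ≤ m ≤ kmax, D^(m-k) * b k ≤ b m
  have hgrowN : ∀ (n : ℕ) (k : ℤ), kmin ≤ k → k + n ≤ kmax → D ^ n * b k ≤ b (k + n) := by
    intro n
    induction n with
    | zero => intro k hk _; simp [hb k]
    | succ n ih =>
      intro k hk hkn
      have h1 := ih k hk (by push_cast at hkn ⊢; omega)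
      have h2 := hgrow (k + n) (by omega) (by push_cast at hkn ⊢; omega)
      have heq : k + ((n : ℤ) + 1) = (k + n) + 1 := by ring
      push_cast
      rw [heq]
      calc D ^ (n + 1) * b k = D * (D ^ n * b k) := by ring
        _ ≤ D * b (k + n) := mul_le_mul_of_nonneg_left h1 (le_of_lt hD0)
        _ ≤ b (k + n + 1) := h2
  have hgrow' : ∀ k m : ℤ, kmin ≤ k → k ≤ m → m ≤ kmax → D ^ (m - k) * b k ≤ b m := by
    intro k m hk hkm hm
    obtain ⟨n, rfl⟩ : ∃ n : ℕ, m = k + n := ⟨(m - k).toNat, by omega⟩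
    rw [add_sub_cancel_left, zpow_natCast]
    exact hgrowN n k hk hm
  -- define g
    -- per-term bound
  have main : ∀ k ∈ Finset.Icc kmin kmax,
      (⨆ m : (Finset.Icc k kmax : Finset ℤ), c m) ^ α * b k ≤
        ∑ m ∈ Finset.Icc k kmax, (c m) ^ α * (D ^ (k - m) * b m) := by
    intro k hk
    rw [Finset.mem_Icc] at hk
    have hne : (Finset.Icc k kmax).Nonempty := ⟨k, Finset.mem_Icc.2 ⟨le_refl _, hk.2⟩⟩
    obtain ⟨m0, hm0, hmax⟩ := Finset.exists_max_image (Finset.Icc k kmax) c hne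
    have hm0' := Finset.mem_Icc.1 hm0
    haveI : Nonempty ((Finset.Icc k kmax : Finset ℤ) : Type) :=
      ⟨⟨k, Finset.mem_Icc.2 ⟨le_refl _, hk.2⟩⟩⟩
    have hsup : (⨆ m : (Finset.Icc k kmax : Finset ℤ), c m) = c m0 := by
      apply le_antisymm
      · exact ciSup_le fun x => hmax x x.2
      · exact le_ciSup (f := fun m : (Finset.Icc k kmax : Finset ℤ) => c m)
          (Set.Finite.bddAbove (Set.finite_range _)) ⟨m0, hm0⟩
    rw [hsup]
    have hbk : b k ≤ D ^ (k - m0) * b m0 := by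
      have h1 := hgrow' k m0 hk.1 hm0'.1 hm0'.2
      have h2 : (0:ℝ) < D ^ (k - m0) := zpow_pos hD0 _
      calc b k = D ^ (k - m0) * (D ^ (m0 - k) * b k) := by
            rw [← mul_assoc, ← zpow_add₀ (ne_of_gt hD0)]
            simp
        _ ≤ D ^ (k - m0) * b m0 := mul_le_mul_of_nonneg_left h1 (le_of_lt h2)
    calc (c m0) ^ α * b k ≤ (c m0) ^ α * (D ^ (k - m0) * b m0) := by
          exact mul_le_mul_of_nonneg_left hbk (Real.rpow_nonneg (hc m0) α)
      _ ≤ ∑ m ∈ Finset.Icc k kmax, (c m) ^ α * (D ^ (k - m) * b m) := by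
          apply Finset.single_le_sum (f := fun m => (c m) ^ α * (D ^ (k - m) * b m)) _ hm0
          intro i _
          exact mul_nonneg (Real.rpow_nonneg (hc i) α)
            (mul_nonneg (le_of_lt (zpow_pos hD0 _)) (hb i))
  calc ∑ k ∈ Finset.Icc kmin kmax, (⨆ m : (Finset.Icc k kmax : Finset ℤ), c m) ^ α * b k
      ≤ ∑ k ∈ Finset.Icc kmin kmax, ∑ m ∈ Finset.Icc k kmax, (c m) ^ α * (D ^ (k - m) * b m) :=
        Finset.sum_le_sum main
    _ = ∑ m ∈ Finset.Icc kmin kmax, ∑ k ∈ Finset.Icc kmin m, (c m) ^ α * (D ^ (k - m) * b m) :=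
        sum_Icc_Icc_comm_int kmin kmax _
    _ = ∑ m ∈ Finset.Icc kmin kmax, (c m) ^ α * b m * ∑ k ∈ Finset.Icc kmin m, D ^ (k - m) := by
        refine Finset.sum_congr rfl fun m _ => ?_
        rw [Finset.mul_sum]
        refine Finset.sum_congr rfl fun k _ => ?_
        ring
    _ ≤ ∑ m ∈ Finset.Icc kmin kmax, (c m) ^ α * b m * (D / (D - 1)) := by
        refine Finset.sum_le_sum fun m hm => ?_
        have hm' := (Finset.mem_Icc.1 hm).1
        have hgeom : ∑ k ∈ Finset.Icc kmin m, D ^ (k - m) ≤ D / (D - 1) := by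
          have hre : ∑ k ∈ Finset.Icc kmin m, D ^ (k - m)
              = ∑ j ∈ Finset.range (m - kmin + 1).toNat, (D⁻¹) ^ j := by
            refine Finset.sum_nbij' (fun k => (m - k).toNat) (fun j => m - (j:ℤ)) ?_ ?_ ?_ ?_ ?_
            · intro k hk; rw [Finset.mem_Icc] at hk; simp only [Finset.mem_range]; omega
            · intro j hj; rw [Finset.mem_range] at hj; rw [Finset.mem_Icc]; omega
            · intro k hk; rw [Finset.mem_Icc] at hk; omega
            · intro j hj; rw [Finset.mem_range] at hj; omega
            · intro k hk
              rw [Finset.mem_Icc] at hk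
              rw [inv_pow, ← zpow_natCast, ← zpow_neg, Int.toNat_of_nonneg (by omega)]
              congr 1; omega
          rw [hre]
          have hr1 : D⁻¹ < 1 := inv_lt_one_of_one_lt₀ hD
          have hr0 : (0:ℝ) ≤ D⁻¹ := inv_nonneg.2 (le_of_lt hD0)
          calc ∑ j ∈ Finset.range (m - kmin + 1).toNat, (D⁻¹) ^ j
              ≤ 1 / (1 - D⁻¹) := by
                rw [geom_sum_eq (ne_of_lt hr1)]
                have hpos : (0:ℝ) < 1 - D⁻¹ := by linarith
                have heq : (D⁻¹ ^ (m - kmin + 1).toNat - 1) / (D⁻¹ - 1)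
                    = (1 - D⁻¹ ^ (m - kmin + 1).toNat) / (1 - D⁻¹) := by
                  rw [← neg_div_neg_eq]; ring_nf
                rw [heq, div_le_div_iff₀ hpos hpos]
                have h1 : (0:ℝ) ≤ (D⁻¹) ^ (m - kmin + 1).toNat := pow_nonneg hr0 _
                nlinarith
            _ = D / (D - 1) := by
                rw [div_eq_div_iff (by have h1 : D⁻¹ < 1 := inv_lt_one_of_one_lt₀ hD; intro h; apply absurd h; intro h; linarith : (1:ℝ) - D⁻¹ ≠ 0) (by intro h; apply absurd h; linarith : D - 1 ≠ 0)]
                field_simp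
        have hnn : 0 ≤ (c m) ^ α * b m := mul_nonneg (Real.rpow_nonneg (hc m) α) (hb m)
        exact mul_le_mul_of_nonneg_left hgeom hnn
    _ = D / (D - 1) * ∑ k ∈ Finset.Icc kmin kmax, (c k) ^ α * b k := by
        rw [Finset.mul_sum]; refine Finset.sum_congr rfl fun k _ => ?_; ring
end

section
/- Let 0 < α < ∞ and θ ≥ 1, and let U be a θ-regular kernel. Then there exists a constant C (depending only on α and θ) such that for any finite index set, any increasing sequence {t_k} of points in (0,∞], and any nonnegative sequence {a_k}_{k=k_min}^{k_max−1} satisfying a_{k+1} ≥ 2θ^α·a_k for all k ≤ k_max − 2, it holds that ∑_{k=k_min}^{k_max−1} a_k · U^α(t_k, t_{k_max}) ≤ C · ∑_{k=k_min}^{k_max−1} a_k · U^α(t_k, t_{k+1}). -/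
open Finset

def ThetaRegular (θ : ℝ) (U : ℝ → ℝ → ℝ) : Prop :=
  (∀ x y, 0 ≤ U x y) ∧
  (∀ y x₁ x₂, 0 ≤ x₁ → x₁ ≤ x₂ → U x₂ y ≤ U x₁ y) ∧
  (∀ x y₁ y₂, y₁ ≤ y₂ → U x y₁ ≤ U x y₂) ∧
  (∀ x y z, 0 ≤ x → x < y → y < z → U x z ≤ θ * (U x y + U y z)) ∧
  (∀ y, 0 < y → 0 < U 0 y)

private lemma rpow_add_le_aux (α c₂ : ℝ) (hα : 0 < α) (hc : 1 < c₂) (x y : ℝ)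
    (hx : 0 ≤ x) (hy : 0 ≤ y) :
    (x + y) ^ α ≤ (1 + (c₂ - 1)⁻¹) ^ α * x ^ α + c₂ ^ α * y ^ α := by
  have hε : 0 < c₂ - 1 := by linarith
  have hc₁pos : (0:ℝ) < 1 + (c₂ - 1)⁻¹ := by positivity
  have hc₂pos : (0:ℝ) < c₂ := by linarith
  have hmax : x + y ≤ max ((1 + (c₂ - 1)⁻¹) * x) (c₂ * y) := by
    rcases le_or_gt (x + y) (c₂ * y) with h | h
    · exact h.trans (le_max_right _ _)
    · refine le_max_of_le_left ?_
      have hyx : (c₂ - 1) * y < x := by nlinarith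
      have hy2 : y ≤ (c₂ - 1)⁻¹ * x := by
        rw [inv_mul_eq_div, le_div_iff₀ hε]; nlinarith
      nlinarith
  have h1 : (x + y) ^ α ≤ (max ((1 + (c₂ - 1)⁻¹) * x) (c₂ * y)) ^ α :=
    Real.rpow_le_rpow (by positivity) hmax hα.le
  rcases max_cases ((1 + (c₂ - 1)⁻¹) * x) (c₂ * y) with ⟨he, _⟩ | ⟨he, _⟩ <;> rw [he] at h1
  · calc (x + y) ^ α ≤ ((1 + (c₂ - 1)⁻¹) * x) ^ α := h1
      _ = (1 + (c₂ - 1)⁻¹) ^ α * x ^ α := Real.mul_rpow hc₁pos.le hx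
      _ ≤ _ := le_add_of_nonneg_right (by positivity)
  · calc (x + y) ^ α ≤ (c₂ * y) ^ α := h1
      _ = c₂ ^ α * y ^ α := Real.mul_rpow hc₂pos.le hy
      _ ≤ _ := le_add_of_nonneg_left (by positivity)

theorem stmt_4 (α θ : ℝ) (hα : 0 < α) (hθ : 1 ≤ θ)
    (U : ℝ → ℝ → ℝ) (hU : ThetaRegular θ U) :
    ∃ C : ℝ, 0 < C ∧
      ∀ (kmin kmax : ℤ), kmin ≤ kmax →
        ∀ (t : ℤ → ℝ) (a : ℤ → ℝ),
          (∀ k ∈ Finset.Icc kmin kmax, 0 < t k) →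
          (∀ k ∈ Finset.Icc kmin kmax, ∀ l ∈ Finset.Icc kmin kmax, k < l → t k < t l) →
          (∀ k, 0 ≤ a k) →
          (∀ k, kmin ≤ k → k ≤ kmax - 2 → 2 * θ ^ α * a k ≤ a (k + 1)) →
          ∑ k ∈ Finset.Icc kmin (kmax - 1), a k * (U (t k) (t kmax)) ^ α ≤
            C * ∑ k ∈ Finset.Icc kmin (kmax - 1), a k * (U (t k) (t (k + 1))) ^ α := by
  obtain ⟨hUnn, hUx, hUy, hUtri, hU0⟩ := hU
  have hθpos : (0:ℝ) < θ := by linarith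
  set c₂ : ℝ := (2:ℝ) ^ ((2*α)⁻¹) with hc₂def
  have h2α : (0:ℝ) < (2*α)⁻¹ := by positivity
  have hc₂ : 1 < c₂ := by
    rw [hc₂def]
    exact Real.one_lt_rpow_iff_of_pos (by norm_num) |>.mpr (Or.inl ⟨by norm_num, h2α⟩)
  set r : ℝ := (2:ℝ) ^ ((2:ℝ)⁻¹) with hrdef
  have hrc : c₂ ^ α = r := by
    rw [hc₂def, hrdef, ← Real.rpow_mul (by norm_num : (0:ℝ) ≤ 2)]
    congr 1
    field_simp
  have hrpos : (0:ℝ) < r := Real.rpow_pos_of_pos (by norm_num) _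
  have hr2 : r < 2 := by
    have : ((2:ℝ) ^ ((2:ℝ)⁻¹)) < 2 ^ (1:ℝ) :=
      Real.rpow_lt_rpow_of_exponent_lt (by norm_num) (by norm_num)
    rwa [Real.rpow_one] at this
  have hρ : (0:ℝ) < 1 - r/2 := by linarith
  have hθα : (1:ℝ) ≤ θ ^ α := Real.one_le_rpow hθ hα.le
  have hθαpos : (0:ℝ) < θ ^ α := Real.rpow_pos_of_pos hθpos _
  have hc₁α : (1:ℝ) ≤ (1 + (c₂ - 1)⁻¹) ^ α := by
    apply Real.one_le_rpow _ hα.le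
    have : (0:ℝ) < (c₂ - 1)⁻¹ := by
      have : (0:ℝ) < c₂ - 1 := by linarith
      positivity
    linarith
  set K : ℝ := θ ^ α * (1 + (c₂ - 1)⁻¹) ^ α with hKdef
  have hK1 : (1:ℝ) ≤ K := one_le_mul_of_one_le_of_one_le hθα hc₁α
  have hKpos : (0:ℝ) < K := by linarith
  refine ⟨K / (1 - r/2), div_pos hKpos hρ, ?_⟩
  intro kmin kmax hkk t a ht hmono ha hgrow
  by_cases hcase : kmin ≤ kmax - 1
  swap
  · rw [Finset.Icc_eq_empty (by omega)]
    simp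
  set T := t kmax with hT
  set S : ℤ → ℝ := fun k => a k * (U (t k) T) ^ α with hSdef
  set V : ℤ → ℝ := fun k => a k * (U (t k) (t (k+1))) ^ α with hVdef
  have hSnn : ∀ k, 0 ≤ S k := fun k => mul_nonneg (ha k) (Real.rpow_nonneg (hUnn _ _) _)
  have hVnn : ∀ k, 0 ≤ V k := fun k => mul_nonneg (ha k) (Real.rpow_nonneg (hUnn _ _) _)
  have hsplit : ∀ f : ℤ → ℝ, ∑ k ∈ Icc kmin (kmax-1), f k
      = (∑ k ∈ Icc kmin (kmax-2), f k) + f (kmax-1) := by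
    intro f
    have h1 : Icc kmin (kmax-1) = insert (kmax-1) (Icc kmin (kmax-2)) := by
      ext x; simp only [Finset.mem_Icc, Finset.mem_insert]; omega
    rw [h1, Finset.sum_insert (by simp only [Finset.mem_Icc]; omega)]
    ring
  have key : ∀ k ∈ Icc kmin (kmax-2), S k ≤ K * V k + (r/2) * S (k+1) := by
    intro k hk
    simp only [Finset.mem_Icc] at hk
    have htk : 0 < t k := ht k (by simp only [Finset.mem_Icc]; omega)
    have h01 : t k < t (k+1) := hmono k (by simp only [Finset.mem_Icc]; omega) (k+1)
      (by simp only [Finset.mem_Icc]; omega) (by omega)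
    have h12 : t (k+1) < T := hmono (k+1) (by simp only [Finset.mem_Icc]; omega) kmax
      (by simp only [Finset.mem_Icc]; omega) (by omega)
    have htri := hUtri (t k) (t (k+1)) T htk.le h01 h12
    have hUa : (U (t k) T) ^ α ≤ θ ^ α * ((U (t k) (t (k+1)) + U (t (k+1)) T) ^ α) := by
      calc (U (t k) T) ^ α ≤ (θ * (U (t k) (t (k+1)) + U (t (k+1)) T)) ^ α :=
            Real.rpow_le_rpow (hUnn _ _) htri hα.le
        _ = _ := Real.mul_rpow hθpos.le (add_nonneg (hUnn _ _) (hUnn _ _))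
    have hconv := rpow_add_le_aux α c₂ hα hc₂ (U (t k) (t (k+1))) (U (t (k+1)) T)
      (hUnn _ _) (hUnn _ _)
    rw [hrc] at hconv
    have hgrowk : 2 * θ ^ α * a k ≤ a (k+1) := hgrow k hk.1 hk.2
    have hunn : (0:ℝ) ≤ (U (t k) (t (k+1))) ^ α := Real.rpow_nonneg (hUnn _ _) _
    have hvnn : (0:ℝ) ≤ (U (t (k+1)) T) ^ α := Real.rpow_nonneg (hUnn _ _) _
    have step : a k * (U (t k) T) ^ α
        ≤ a k * (θ ^ α * ((1 + (c₂ - 1)⁻¹) ^ α * (U (t k) (t (k+1))) ^ α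
            + r * (U (t (k+1)) T) ^ α)) := by
      apply mul_le_mul_of_nonneg_left _ (ha k)
      exact hUa.trans (mul_le_mul_of_nonneg_left hconv hθαpos.le)
    have h1 : a k * θ ^ α ≤ a (k+1) / 2 := by linarith
    have h2 : (a k * θ ^ α) * (r * (U (t (k+1)) T) ^ α)
        ≤ (a (k+1) / 2) * (r * (U (t (k+1)) T) ^ α) :=
      mul_le_mul_of_nonneg_right h1 (by positivity)
    calc S k ≤ a k * (θ ^ α * ((1 + (c₂ - 1)⁻¹) ^ α * (U (t k) (t (k+1))) ^ α
            + r * (U (t (k+1)) T) ^ α)) := step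
      _ ≤ K * V k + (r/2) * S (k+1) := by
          simp only [hSdef, hVdef, hKdef]
          nlinarith [h2]
  have hshift : ∑ k ∈ Icc kmin (kmax-2), S (k+1) = ∑ k ∈ Icc (kmin+1) (kmax-1), S k := by
    rw [show (kmin+1 : ℤ) = kmin + 1 from rfl, show (kmax-1 : ℤ) = (kmax-2) + 1 by ring,
      ← Finset.map_add_right_Icc, Finset.sum_map]
    rfl
  have hsub : ∑ k ∈ Icc (kmin+1) (kmax-1), S k ≤ ∑ k ∈ Icc kmin (kmax-1), S k :=
    Finset.sum_le_sum_of_subset_of_nonneg (Finset.Icc_subset_Icc (by omega) le_rfl)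
      (fun i _ _ => hSnn i)
  have hlast : S (kmax-1) = V (kmax-1) := by
    simp only [hSdef, hVdef, hT]
    rw [show (kmax - 1 + 1 : ℤ) = kmax by ring]
  have hJV : (0:ℝ) ≤ ∑ k ∈ Icc kmin (kmax-2), V k := Finset.sum_nonneg fun i _ => hVnn i
  have hAbound : ∑ k ∈ Icc kmin (kmax-1), S k
      ≤ K * ∑ k ∈ Icc kmin (kmax-1), V k + (r/2) * ∑ k ∈ Icc kmin (kmax-1), S k := by
    rw [hsplit S, hsplit V]
    have h3 : ∑ k ∈ Icc kmin (kmax-2), S k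
        ≤ K * ∑ k ∈ Icc kmin (kmax-2), V k + (r/2) * ∑ k ∈ Icc kmin (kmax-2), S (k+1) := by
      calc ∑ k ∈ Icc kmin (kmax-2), S k
          ≤ ∑ k ∈ Icc kmin (kmax-2), (K * V k + (r/2) * S (k+1)) := Finset.sum_le_sum key
        _ = _ := by rw [Finset.sum_add_distrib, ← Finset.mul_sum, ← Finset.mul_sum]
    have h4 : ∑ k ∈ Icc kmin (kmax-2), S (k+1) ≤ ∑ k ∈ Icc kmin (kmax-1), S k := by
      rw [hshift]; exact hsub
    have h5 : V (kmax-1) ≤ K * V (kmax-1) := le_mul_of_one_le_left (hVnn _) hK1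
    have h6 : (0:ℝ) ≤ r/2 := by positivity
    have h7 := mul_le_mul_of_nonneg_left h4 h6
    rw [hsplit S] at h7
    nlinarith [h3, h5, h7, hlast]
  have hBnn : (0:ℝ) ≤ ∑ k ∈ Icc kmin (kmax-1), V k := Finset.sum_nonneg fun i _ => hVnn i
  have goal2 : ∑ k ∈ Icc kmin (kmax-1), S k
      ≤ K / (1 - r/2) * ∑ k ∈ Icc kmin (kmax-1), V k := by
    rw [div_mul_eq_mul_div, le_div_iff₀ hρ]
    nlinarith [hAbound]
  exact goal2
end

section
/- Let 0 < q < 1 < p < ∞, r = pq/(p−q), θ > 0, let U be a θ-regular kernel, and let v, w be weights. If both A₁ := ∫_0^∞ (∫_0^t w)^{r/p} w(t) (∫_t^∞ U^{p'}(t,z) v^{1−p'}(z) dz)^{r/p'} dt < ∞ and A₂ := ∫_0^∞ (∫_0^t w(x) U^q(x,t) dx)^{r/p} w(t) sup_{z∈[t,∞)} U^q(t,z)(∫_z^∞ v^{1−p'})^{r/p'} dt < ∞, then for every covering sequence {t_k}_{k∈I} the discrete sum D₁-sum := ∑_{k∈I₀} (∫_{t_{k−1}}^{t_k} w)^{r/q}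 (∫_{t_k}^{t_{k+1}} U^{p'}(t_k,x) v^{1−p'}(x) dx)^{r/p'} satisfies D₁-sum ≤ c·A₁, with a constant c depending only on p, q, θ. -/
open MeasureTheory Finset
open scoped ENNReal

def IsWeight (w : ℝ → ℝ) : Prop :=
  Measurable w ∧ (∀ x, 0 ≤ w x) ∧
  ∀ t : ℝ, 0 < t →
    0 < (∫⁻ x in Set.Ioo 0 t, ENNReal.ofReal (w x)) ∧
    (∫⁻ x in Set.Ioo 0 t, ENNReal.ofReal (w x)) < ⊤

/-- The real interval corresponding to a pair of extended-real endpoints. -/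
def seg (a b : ℝ≥0∞) : Set ℝ := {x : ℝ | a < ENNReal.ofReal x ∧ ENNReal.ofReal x < b}

lemma swap_lemma (ν : Measure ℝ) [IsFiniteMeasure ν] :
    ∫⁻ x, ν (Set.Iio x) ∂ν = ∫⁻ y, ν (Set.Ioi y) ∂ν := by
  have hmeas : Measurable (Function.uncurry fun x y : ℝ => if y < x then (1:ℝ≥0∞) else 0) := by
    have : MeasurableSet {p : ℝ × ℝ | p.2 < p.1} := measurableSet_lt measurable_snd measurable_fst
    exact Measurable.ite this measurable_const measurable_const
  have h1 : ∀ x : ℝ, ∫⁻ y, (if y < x then (1:ℝ≥0∞) else 0) ∂ν = ν (Set.Iio x) := by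
    intro x
    rw [show (fun y => if y < x then (1:ℝ≥0∞) else 0) = (Set.Iio x).indicator 1 by
      ext y; simp [Set.indicator_apply, Set.mem_Iio]]
    exact lintegral_indicator_one measurableSet_Iio
  have h2 : ∀ y : ℝ, ∫⁻ x, (if y < x then (1:ℝ≥0∞) else 0) ∂ν = ν (Set.Ioi y) := by
    intro y
    rw [show (fun x => if y < x then (1:ℝ≥0∞) else 0) = (Set.Ioi y).indicator 1 by
      ext x; simp [Set.indicator_apply, Set.mem_Ioi]]
    exact lintegral_indicator_one measurableSet_Ioi
  calc ∫⁻ x, ν (Set.Iio x) ∂ν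
      = ∫⁻ x, ∫⁻ y, (if y < x then (1:ℝ≥0∞) else 0) ∂ν ∂ν := by simp_rw [h1]
    _ = ∫⁻ y, ∫⁻ x, (if y < x then (1:ℝ≥0∞) else 0) ∂ν ∂ν :=
        lintegral_lintegral_swap hmeas.aemeasurable
    _ = ∫⁻ y, ν (Set.Ioi y) ∂ν := by simp_rw [h2]

lemma cheb (ν : Measure ℝ) [IsFiniteMeasure ν] (hatom : ∀ x : ℝ, ν {x} = 0)
    (s : ℝ) (hs : 0 ≤ s) :
    (ν Set.univ) ^ (s+1) ≤ 4 ^ (s+1) * ∫⁻ x, (ν (Set.Iio x)) ^ s ∂ν := by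
  set M := ν Set.univ with hM
  by_cases hM0 : M = 0
  · simp [hM0, ENNReal.zero_rpow_of_pos (by linarith : (0:ℝ) < s+1)]
  have hMtop : M ≠ ⊤ := measure_ne_top ν _
  set f : ℝ → ℝ≥0∞ := fun x => ν (Set.Iio x) with hf
  have hfmono : Monotone f := fun a b hab => measure_mono (Set.Iio_subset_Iio hab)
  have hfmeas : Measurable f := hfmono.measurable
  have hfM : ∀ x, f x ≤ M := fun x => measure_mono (Set.subset_univ _)
  -- sum identity
  have hpt : ∀ x : ℝ, f x + ν (Set.Ioi x) = M := by
    intro x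
    have hu : ν (Set.Iio x ∪ Set.Ioi x) = ν (Set.Iio x) + ν (Set.Ioi x) :=
      measure_union (((Set.Iio_disjoint_Ici le_rfl).mono_right Set.Ioi_subset_Ici_self)) measurableSet_Ioi
    have hc : ν ({x}ᶜ) = M := by
      rw [measure_compl (measurableSet_singleton x) (measure_ne_top ν _), hatom, tsub_zero]
    rw [← Set.Iio_union_Ioi] at hc
    rw [hf]; dsimp only; rw [← hu, hc]
  have hsum : (∫⁻ x, f x ∂ν) + (∫⁻ x, f x ∂ν) = M * M := by
    nth_rewrite 2 [swap_lemma ν]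
    rw [← lintegral_add_left hfmeas]
    simp_rw [hpt]
    rw [lintegral_const, ← hM]
  have hIle : ∫⁻ x, f x ∂ν ≤ M * M := by
    calc ∫⁻ x, f x ∂ν ≤ ∫⁻ _, M ∂ν := lintegral_mono hfM
      _ = M * M := by rw [lintegral_const, ← hM]
  have hItop : ∫⁻ x, f x ∂ν ≠ ⊤ :=
    ne_top_of_le_ne_top (ENNReal.mul_ne_top hMtop hMtop) hIle
  -- the set A
  set A : Set ℝ := {x | M/4 ≤ f x} with hA
  have hAmeas : MeasurableSet A := measurableSet_le measurable_const hfmeas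
  have hub : ∀ x, f x ≤ M/4 + A.indicator (fun _ => M) x := by
    intro x
    by_cases hx : x ∈ A
    · simp only [Set.indicator_of_mem hx]
      exact le_add_left (hfM x)
    · simp only [Set.indicator_of_notMem hx, add_zero]
      exact (lt_of_not_ge hx).le
  have hIub : ∫⁻ x, f x ∂ν ≤ M/4 * M + M * ν A := by
    calc ∫⁻ x, f x ∂ν ≤ ∫⁻ x, (M/4 + A.indicator (fun _ => M) x) ∂ν := lintegral_mono hub
      _ = M/4 * M + M * ν A := by
          rw [lintegral_add_left measurable_const, lintegral_const,
            lintegral_indicator_const hAmeas, ← hM]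
  -- deduce M/4 ≤ ν A via reals
  have hAfin : ν A ≠ ⊤ := measure_ne_top ν _
  have hM4net : M/4 ≠ ⊤ := (ENNReal.div_lt_top hMtop (by norm_num)).ne
  have hMA : M / 4 ≤ ν A := by
    have h4 : ((4:ℝ≥0∞)) ≠ 0 := by norm_num
    have h4t : ((4:ℝ≥0∞)) ≠ ⊤ := by norm_num
    set m := M.toReal with hm
    have hm0 : 0 < m := ENNReal.toReal_pos hM0 hMtop
    have hF := congrArg ENNReal.toReal hsum
    rw [ENNReal.toReal_add hItop hItop, ENNReal.toReal_mul] at hF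
    have hub' : (∫⁻ x, f x ∂ν).toReal ≤ (M/4 * M + M * ν A).toReal := by
      apply ENNReal.toReal_mono _ hIub
      exact ENNReal.add_ne_top.2 ⟨ENNReal.mul_ne_top hM4net hMtop,
        ENNReal.mul_ne_top hMtop hAfin⟩
    rw [ENNReal.toReal_add (ENNReal.mul_ne_top hM4net hMtop)
      (ENNReal.mul_ne_top hMtop hAfin), ENNReal.toReal_mul, ENNReal.toReal_mul,
      ENNReal.toReal_div] at hub'
    have h4r : ((4:ℝ≥0∞)).toReal = 4 := by norm_num
    rw [h4r] at hub'
    have key : m / 4 ≤ (ν A).toReal := by nlinarith [hF, hub', (ENNReal.toReal_nonneg : 0 ≤ (ν A).toReal)]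
    rw [← ENNReal.ofReal_toReal hAfin, ← ENNReal.ofReal_toReal hMtop]
    rw [← ENNReal.ofReal_toReal h4t, h4r]
    rw [← ENNReal.ofReal_div_of_pos (by norm_num)]
    exact ENNReal.ofReal_le_ofReal key
  -- conclude
  have hM4ne0 : M/4 ≠ 0 := by
    simp [ENNReal.div_eq_zero_iff, hM0]
  have hlow : (M/4) ^ (s+1) ≤ ∫⁻ x, f x ^ s ∂ν := by
    calc (M/4) ^ (s+1) = (M/4)^s * (M/4) := by
          rw [ENNReal.rpow_add s 1 hM4ne0 hM4net, ENNReal.rpow_one]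
      _ ≤ (M/4)^s * ν A := mul_le_mul_right hMA _
      _ = ∫⁻ x, A.indicator (fun _ => (M/4)^s) x ∂ν := (lintegral_indicator_const hAmeas _).symm
      _ ≤ ∫⁻ x, f x ^ s ∂ν := by
          apply lintegral_mono
          intro x
          by_cases hx : x ∈ A
          · simp only [Set.indicator_of_mem hx]
            exact ENNReal.rpow_le_rpow hx hs
          · simp [Set.indicator_of_notMem hx]
  calc M ^ (s+1) = (4 * (M/4)) ^ (s+1) := by
        rw [ENNReal.mul_div_cancel (by norm_num) (by norm_num)]
    _ = 4 ^ (s+1) * (M/4) ^ (s+1) := ENNReal.mul_rpow_of_nonneg _ _ (by linarith)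
    _ ≤ 4 ^ (s+1) * ∫⁻ x, f x ^ s ∂ν := mul_le_mul_right hlow _

theorem stmt_15 (p q θ : ℝ) (hq0 : 0 < q) (hq1 : q < 1) (hp : 1 < p) (hθ : 0 < θ)
    (r p' : ℝ) (hr : r = p * q / (p - q)) (hp' : p' = p / (p - 1)) :
    ∃ c : ℝ≥0∞, 0 < c ∧ c ≠ ⊤ ∧
      ∀ (U : ℝ → ℝ → ℝ) (v w : ℝ → ℝ),
        ThetaRegular θ U → IsWeight v → IsWeight w →
        (∫⁻ t in Set.Ioi (0 : ℝ),
            (∫⁻ x in Set.Ioo (0 : ℝ) t, ENNReal.ofReal (w x)) ^ (r / p) *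
              ENNReal.ofReal (w t) *
              (∫⁻ z in Set.Ioi t,
                  ENNReal.ofReal ((U t z) ^ p' * (v z) ^ (1 - p'))) ^ (r / p')) < ⊤ →
        (∫⁻ t in Set.Ioi (0 : ℝ),
            (∫⁻ x in Set.Ioo (0 : ℝ) t,
                ENNReal.ofReal (w x) * ENNReal.ofReal (U x t) ^ q) ^ (r / p) *
              ENNReal.ofReal (w t) *
              ⨆ z ∈ Set.Ici t, ENNReal.ofReal (U t z) ^ q *
                (∫⁻ s in Set.Ioi z, ENNReal.ofReal ((v s) ^ (1 - p'))) ^ (r / p')) < ⊤ →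
        ∀ (kmin kmax : ℤ), kmin + 2 ≤ kmax →
          ∀ t : ℤ → ℝ≥0∞, t kmin = 0 → t kmax = ⊤ →
            (∀ k ∈ Finset.Icc kmin kmax, ∀ l ∈ Finset.Icc kmin kmax, k < l → t k < t l) →
            ∑ k ∈ Finset.Icc (kmin + 1) (kmax - 1),
                (∫⁻ x in seg (t (k - 1)) (t k), ENNReal.ofReal (w x)) ^ (r / q) *
                  (∫⁻ x in seg (t k) (t (k + 1)),
                      ENNReal.ofReal ((U (t k).toReal x) ^ p' * (v x) ^ (1 - p'))) ^ (r / p') ≤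
              c * ∫⁻ s in Set.Ioi (0 : ℝ),
                (∫⁻ x in Set.Ioo (0 : ℝ) s, ENNReal.ofReal (w x)) ^ (r / p) *
                  ENNReal.ofReal (w s) *
                  (∫⁻ z in Set.Ioi s,
                      ENNReal.ofReal ((U s z) ^ p' * (v z) ^ (1 - p'))) ^ (r / p') := by
  have hp0 : 0 < p := lt_trans one_pos hp
  have hpq : 0 < p - q := by linarith
  have hr0 : 0 < r := by rw [hr]; exact div_pos (mul_pos (by linarith) hq0) hpq
  have hs0 : 0 ≤ r / p := (div_pos hr0 hp0).le
  have hp'0 : 0 < p' := by rw [hp']; exact div_pos (by linarith) (by linarith)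
  have hrp'0 : 0 ≤ r / p' := (div_pos hr0 hp'0).le
  have hrq : r / q = r / p + 1 := by
    rw [hr]; field_simp; ring
  refine ⟨(4 : ℝ≥0∞) ^ (r / q), ?_, ?_, ?_⟩
  · exact ENNReal.rpow_pos (by norm_num) (by norm_num)
  · exact ENNReal.rpow_ne_top_of_nonneg (by positivity) (by norm_num)
  intro U v w hU hv hw _hA1 _hA2 kmin kmax hk t ht0 httop hmono
  set Φ : ℝ → ℝ≥0∞ := fun x =>
    (∫⁻ y in Set.Ioo (0 : ℝ) x, ENNReal.ofReal (w y)) ^ (r / p) *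
      ENNReal.ofReal (w x) *
      (∫⁻ z in Set.Ioi x, ENNReal.ofReal ((U x z) ^ p' * (v z) ^ (1 - p'))) ^ (r / p')
    with hΦ
  set μ : Measure ℝ := volume.withDensity (fun x => ENNReal.ofReal (w x)) with hμ
  have hsegmeas : ∀ a b : ℝ≥0∞, MeasurableSet (seg a b) := by
    intro a b
    exact ENNReal.measurable_ofReal measurableSet_Ioo
  have hsegpos : ∀ (a b : ℝ≥0∞) (x : ℝ), x ∈ seg a b → 0 < x := by
    intro a b x hx
    exact ENNReal.ofReal_pos.mp (((zero_le : 0 ≤ a)).trans_lt hx.1)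
  -- the per-k estimate
  have key : ∀ k ∈ Finset.Icc (kmin + 1) (kmax - 1),
      (∫⁻ x in seg (t (k - 1)) (t k), ENNReal.ofReal (w x)) ^ (r / q) *
        (∫⁻ x in seg (t k) (t (k + 1)),
            ENNReal.ofReal ((U (t k).toReal x) ^ p' * (v x) ^ (1 - p'))) ^ (r / p') ≤
      (4 : ℝ≥0∞) ^ (r / q) * ∫⁻ x in seg (t (k - 1)) (t k), Φ x := by
    intro k hkmem
    rw [Finset.mem_Icc] at hkmem
    have hk1 : k - 1 ∈ Finset.Icc kmin kmax := by rw [Finset.mem_Icc]; omega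
    have hk2 : k ∈ Finset.Icc kmin kmax := by rw [Finset.mem_Icc]; omega
    have hkmax : kmax ∈ Finset.Icc kmin kmax := by rw [Finset.mem_Icc]; omega
    have hab : t (k - 1) < t k := hmono _ hk1 _ hk2 (by omega)
    have hbtop : t k ≠ ⊤ := by
      have := hmono _ hk2 _ hkmax (by omega)
      rw [httop] at this; exact this.ne
    have hb0 : 0 < t k := (zero_le : 0 ≤ t (k - 1)).trans_lt hab
    set τ : ℝ := (t k).toReal with hτdef
    have hτ0 : 0 < τ := ENNReal.toReal_pos hb0.ne' hbtop
    have hbτ : t k = ENNReal.ofReal τ := (ENNReal.ofReal_toReal hbtop).symm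
    set I : Set ℝ := seg (t (k - 1)) (t k) with hI
    have hImeas : MeasurableSet I := hsegmeas _ _
    have hIsub : I ⊆ Set.Ioo 0 τ := by
      intro x hx
      have hx0 : 0 < x := hsegpos _ _ _ hx
      refine ⟨hx0, ?_⟩
      have := hx.2
      rw [hbτ] at this
      exact (ENNReal.ofReal_lt_ofReal_iff hτ0).mp this
    have hμIfin : μ I < ⊤ := by
      refine lt_of_le_of_lt (measure_mono hIsub) ?_
      rw [hμ, withDensity_apply _ measurableSet_Ioo]
      exact (hw.2.2 τ hτ0).2
    set ν : Measure ℝ := μ.restrict I with hν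
    haveI : IsFiniteMeasure ν := ⟨by rwa [hν, Measure.restrict_apply_univ]⟩
    have hμatom : ∀ x : ℝ, μ {x} = 0 := by
      intro x
      rw [hμ, withDensity_apply _ (measurableSet_singleton x)]
      exact setLIntegral_measure_zero _ _ (measure_singleton x)
    have hatom : ∀ x : ℝ, ν {x} = 0 := by
      intro x
      refine le_antisymm ?_ zero_le
      rw [hν, Measure.restrict_apply (measurableSet_singleton x)]
      exact (hμatom x) ▸ measure_mono Set.inter_subset_left
    have hW : (∫⁻ x in I, ENNReal.ofReal (w x)) = ν Set.univ := by
      rw [hν, Measure.restrict_apply_univ, hμ, withDensity_apply _ hImeas]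
    set B : ℝ≥0∞ := (∫⁻ x in seg (t k) (t (k + 1)),
        ENNReal.ofReal ((U τ x) ^ p' * (v x) ^ (1 - p'))) ^ (r / p') with hB
    -- pointwise comparison of B with the inner integral at x
    have hBle : ∀ x ∈ I, B ≤
        (∫⁻ z in Set.Ioi x, ENNReal.ofReal ((U x z) ^ p' * (v z) ^ (1 - p'))) ^ (r / p') := by
      intro x hx
      have hx0 : 0 < x := hsegpos _ _ _ hx
      have hxτ : x < τ := (hIsub hx).2
      apply ENNReal.rpow_le_rpow _ hrp'0
      have hJsub : seg (t k) (t (k + 1)) ⊆ Set.Ioi x := by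
        intro z hz
        have hz0 : 0 < z := hsegpos _ _ _ hz
        have h1 : ENNReal.ofReal x < ENNReal.ofReal z := by
          refine lt_trans ?_ hz.1
          rw [hbτ]
          exact ENNReal.ofReal_lt_ofReal_iff hτ0 |>.mpr hxτ
        exact (ENNReal.ofReal_lt_ofReal_iff hz0).mp h1
      calc ∫⁻ z in seg (t k) (t (k + 1)), ENNReal.ofReal ((U τ z) ^ p' * (v z) ^ (1 - p'))
          ≤ ∫⁻ z in seg (t k) (t (k + 1)),
              ENNReal.ofReal ((U x z) ^ p' * (v z) ^ (1 - p')) := by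
            refine setLIntegral_mono' (hsegmeas _ _) ?_
            intro z _
            apply ENNReal.ofReal_le_ofReal
            apply mul_le_mul_of_nonneg_right _ (Real.rpow_nonneg (hv.2.1 z) _)
            exact Real.rpow_le_rpow (hU.1 τ z) (hU.2.1 z x τ hx0.le hxτ.le) hp'0.le
        _ ≤ ∫⁻ z in Set.Ioi x, ENNReal.ofReal ((U x z) ^ p' * (v z) ^ (1 - p')) :=
            lintegral_mono_set hJsub
    -- the measurable inner function
    have hmono2 : Monotone fun x => ν (Set.Iio x) :=
      fun a b hab' => measure_mono (Set.Iio_subset_Iio hab')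
    have hg : Measurable fun x => ν (Set.Iio x) ^ (r / p) * B :=
      ((hmono2.measurable).pow measurable_const).mul_const B
    calc (∫⁻ x in I, ENNReal.ofReal (w x)) ^ (r / q) * B
        = (ν Set.univ) ^ (r / p + 1) * B := by rw [hW, hrq]
      _ ≤ ((4 : ℝ≥0∞) ^ (r / p + 1) * ∫⁻ x, ν (Set.Iio x) ^ (r / p) ∂ν) * B :=
          mul_le_mul_left (cheb ν hatom (r / p) hs0) B
      _ = (4 : ℝ≥0∞) ^ (r / q) * ∫⁻ x, ν (Set.Iio x) ^ (r / p) * B ∂ν := by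
          rw [lintegral_mul_const B ((hmono2.measurable).pow measurable_const),
            hrq, mul_assoc]
      _ = (4 : ℝ≥0∞) ^ (r / q) *
            ∫⁻ x in I, ENNReal.ofReal (w x) * (ν (Set.Iio x) ^ (r / p) * B) := by
          congr 1
          rw [hν, hμ, setLIntegral_withDensity_eq_setLIntegral_mul volume
            (hw.1.ennreal_ofReal) hg hImeas]
          rfl
      _ ≤ (4 : ℝ≥0∞) ^ (r / q) * ∫⁻ x in I, Φ x := by
          apply mul_le_mul_right
          refine setLIntegral_mono' hImeas ?_
          intro x hx
          have h1 : ν (Set.Iio x) ^ (r / p) ≤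
              (∫⁻ y in Set.Ioo (0 : ℝ) x, ENNReal.ofReal (w y)) ^ (r / p) := by
            apply ENNReal.rpow_le_rpow _ hs0
            rw [hν, Measure.restrict_apply measurableSet_Iio, hμ,
              ← withDensity_apply _ (measurableSet_Ioo : MeasurableSet (Set.Ioo (0:ℝ) x))]
            refine measure_mono ?_
            intro y hy
            exact ⟨hsegpos _ _ _ hy.2, hy.1⟩
          have h2 := hBle x hx
          calc ENNReal.ofReal (w x) * (ν (Set.Iio x) ^ (r / p) * B)
              = ν (Set.Iio x) ^ (r / p) * ENNReal.ofReal (w x) * B := by ring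
            _ ≤ Φ x := by rw [hΦ]; exact mul_le_mul' (mul_le_mul_left h1 _) h2
  -- sum up
  have hdisj : (↑(Finset.Icc (kmin + 1) (kmax - 1)) : Set ℤ).PairwiseDisjoint
      (fun k => seg (t (k - 1)) (t k)) := by
    have hle : ∀ i ∈ Finset.Icc kmin kmax, ∀ j ∈ Finset.Icc kmin kmax, i ≤ j → t i ≤ t j := by
      intro i hi j hj hij
      rcases eq_or_lt_of_le hij with h | h
      · rw [h]
      · exact (hmono i hi j hj h).le
    have base : ∀ j k : ℤ, j ∈ Finset.Icc (kmin + 1) (kmax - 1) →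
        k ∈ Finset.Icc (kmin + 1) (kmax - 1) → j < k →
        Disjoint (seg (t (j - 1)) (t j)) (seg (t (k - 1)) (t k)) := by
      intro j k hj hk hjk
      rw [Finset.mem_Icc] at hj hk
      rw [Set.disjoint_left]
      intro x hxj hxk
      have h1 : t j ≤ t (k - 1) :=
        hle j (by rw [Finset.mem_Icc]; omega) (k - 1) (by rw [Finset.mem_Icc]; omega) (by omega)
      exact absurd ((hxj.2.trans_le h1).trans hxk.1) (lt_irrefl _)
    intro j hj k hk hjk
    rcases lt_or_gt_of_ne hjk with h | h
    · exact base j k (by exact_mod_cast hj) (by exact_mod_cast hk) h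
    · exact (base k j (by exact_mod_cast hk) (by exact_mod_cast hj) h).symm
  have hUsub : (⋃ k ∈ Finset.Icc (kmin + 1) (kmax - 1), seg (t (k - 1)) (t k)) ⊆
      Set.Ioi (0 : ℝ) := by
    intro x hx
    simp only [Set.mem_iUnion] at hx
    obtain ⟨k, _, hxk⟩ := hx
    exact hsegpos _ _ _ hxk
  calc ∑ k ∈ Finset.Icc (kmin + 1) (kmax - 1),
        (∫⁻ x in seg (t (k - 1)) (t k), ENNReal.ofReal (w x)) ^ (r / q) *
          (∫⁻ x in seg (t k) (t (k + 1)),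
              ENNReal.ofReal ((U (t k).toReal x) ^ p' * (v x) ^ (1 - p'))) ^ (r / p')
      ≤ ∑ k ∈ Finset.Icc (kmin + 1) (kmax - 1),
          (4 : ℝ≥0∞) ^ (r / q) * ∫⁻ x in seg (t (k - 1)) (t k), Φ x :=
        Finset.sum_le_sum key
    _ = (4 : ℝ≥0∞) ^ (r / q) *
          ∑ k ∈ Finset.Icc (kmin + 1) (kmax - 1), ∫⁻ x in seg (t (k - 1)) (t k), Φ x :=
        (Finset.mul_sum _ _ _).symm
    _ = (4 : ℝ≥0∞) ^ (r / q) *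
          ∫⁻ x in ⋃ k ∈ Finset.Icc (kmin + 1) (kmax - 1), seg (t (k - 1)) (t k), Φ x := by
        rw [lintegral_biUnion_finset hdisj (fun k _ => hsegmeas _ _)]
    _ ≤ (4 : ℝ≥0∞) ^ (r / q) * ∫⁻ x in Set.Ioi (0 : ℝ), Φ x :=
        mul_le_mul_right (lintegral_mono_set hUsub) _
end
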